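/- Let A, B, C satisfy condition (ABC) and F(y) = 3Ay² + By + C. Let ξ ∈ ℝ, let h : [-1,1] → ℂ be continuous, and let φ : [-1,1] → ℂ be a C⁴ solution of the Orr–Sommerfeld problem φ'''' − 2ξ²φ'' + ξ⁴φ − iξ[F(y)(φ'' − ξ²φ) − 6Aφ] = h on (-1,1) with φ(±1) = φ'(±1) = 0. Assume moreover that the quotient σ = φ/F extends to a C³ function on [-1,1]. Then −12A∫₋₁¹|σ'(y)|²dy − 6Aξ²∫₋₁¹|σ(y)|²dy + ∫₋₁¹F(y)(|σ''(y)|² + 2ξ²|σ'(y)|² + ξ⁴|σ(y)|²)dy ≤ Re ∫₋₁¹ h(y)·conj(σ(y)) dy. -/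

import Mathlib

open MeasureTheory intervalIntegral

section OSaux

open Complex

lemma os_hasDerivAt_re_mul_conj {f g : ℝ → ℂ} {f' g' : ℂ} {y : ℝ}
    (hf : HasDerivAt f f' y) (hg : HasDerivAt g g' y) :
    HasDerivAt (fun t => (f t * (starRingEnd ℂ) (g t)).re)
      ((f' * (starRingEnd ℂ) (g y) + f y * (starRingEnd ℂ) g').re) y := by
  have hs : HasDerivAt (fun t => (starRingEnd ℂ) (g t)) ((starRingEnd ℂ) g') y := by
    simpa only [starRingEnd_apply] using hg.star
  exact
    (Complex.reCLM.hasFDerivAt.comp_hasDerivAt y (hf.mul hs))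

lemma os_hasDerivAt_im_mul_conj {f g : ℝ → ℂ} {f' g' : ℂ} {y : ℝ}
    (hf : HasDerivAt f f' y) (hg : HasDerivAt g g' y) :
    HasDerivAt (fun t => (f t * (starRingEnd ℂ) (g t)).im)
      ((f' * (starRingEnd ℂ) (g y) + f y * (starRingEnd ℂ) g').im) y := by
  have hs : HasDerivAt (fun t => (starRingEnd ℂ) (g t)) ((starRingEnd ℂ) g') y := by
    simpa only [starRingEnd_apply] using hg.star
  exact
    (Complex.imCLM.hasFDerivAt.comp_hasDerivAt y (hf.mul hs))

lemma os_hasDerivAt_F (A B C y : ℝ) :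
    HasDerivAt (fun y : ℝ => 3*A*y^2 + B*y + C) (6*A*y + B) y := by
  have h1 := (((hasDerivAt_pow 2 y).const_mul (3*A)).add
    ((hasDerivAt_id y).const_mul B)).add_const C
  exact h1.congr_deriv (by norm_num; ring)

lemma os_hasDerivAt_F' (A B y : ℝ) :
    HasDerivAt (fun y : ℝ => 6*A*y + B) (6*A) y := by
  simpa using ((hasDerivAt_id y).const_mul (6*A)).add_const B

lemma os_continuous_re_mul_conj {f g : ℝ → ℂ} (hf : Continuous f) (hg : Continuous g) :
    Continuous (fun y => (f y * (starRingEnd ℂ) (g y)).re) := by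
  apply Complex.continuous_re.comp
  apply hf.mul
  simpa only [starRingEnd_apply, Function.comp_def] using (continuous_star.comp hg)

lemma os_continuous_im_mul_conj {f g : ℝ → ℂ} (hf : Continuous f) (hg : Continuous g) :
    Continuous (fun y => (f y * (starRingEnd ℂ) (g y)).im) := by
  apply Complex.continuous_im.comp
  apply hf.mul
  simpa only [starRingEnd_apply, Function.comp_def] using (continuous_star.comp hg)

lemma os_sign1 {A B C : ℝ} (hABC : (A, B, C) ≠ (0, 0, 0)) (hA : A ≤ 0)
    (hB : |B| ≤ 3 * A + C) (h0 : 3*A + B + C = 0) : 6*A + B < 0 := by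
  by_contra hc
  push_neg at hc
  have h1 : (0:ℝ) ≤ 3*A + C := le_trans (abs_nonneg B) hB
  have h2 : -|B| ≤ B := neg_abs_le B
  have h3 : B ≤ |B| := le_abs_self B
  have hA0 : A = 0 := by nlinarith
  have hC0 : C = 0 := by nlinarith
  have hB0 : B = 0 := by nlinarith
  exact hABC (by simp [hA0, hB0, hC0])

lemma os_sign2 {A B C : ℝ} (hABC : (A, B, C) ≠ (0, 0, 0)) (hA : A ≤ 0)
    (hB : |B| ≤ 3 * A + C) (h0 : 3*A - B + C = 0) : 0 < -(6*A) + B := by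
  by_contra hc
  push_neg at hc
  have h1 : (0:ℝ) ≤ 3*A + C := le_trans (abs_nonneg B) hB
  have h2 : -|B| ≤ B := neg_abs_le B
  have h3 : B ≤ |B| := le_abs_self B
  have hA0 : A = 0 := by nlinarith
  have hC0 : C = 0 := by nlinarith
  have hB0 : B = 0 := by nlinarith
  exact hABC (by simp [hA0, hB0, hC0])

/-- The boundary functional in the integration by parts. -/
noncomputable def osW (A B C ξ : ℝ) (φ σ : ℝ → ℂ) : ℝ → ℝ := fun y =>
  (iteratedDeriv 3 φ y * (starRingEnd ℂ) (σ y)).re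
  - (iteratedDeriv 2 φ y * (starRingEnd ℂ) (deriv σ y)).re
  + 6*A*((σ y * (starRingEnd ℂ) (deriv σ y)).re)
  + (6*A*y+B)*((deriv σ y * (starRingEnd ℂ) (deriv σ y)).re)
  - ξ^2*((6*A*y+B)*((σ y * (starRingEnd ℂ) (σ y)).re))
  - 2*ξ^2*((3*A*y^2+B*y+C)*((deriv σ y * (starRingEnd ℂ) (σ y)).re))
  + ξ*((3*A*y^2+B*y+C)^2*((deriv σ y * (starRingEnd ℂ) (σ y)).im))

end OSaux

/-- Key a priori inequality \eqref{key-apriori}: under condition (ABC), if `φ` is a `C⁴`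
solution of the non-homogeneous Orr–Sommerfeld problem with datum `h` and the quotient
`σ = φ/F` extends to a `C³` function on `[-1,1]`, then
`−12A∫|σ'|² − 6Aξ²∫|σ|² + ∫F(|σ''|² + 2ξ²|σ'|² + ξ⁴|σ|²) ≤ Re ∫ h·conj(σ)`. -/
theorem stmt_7 (A B C : ℝ) (hABC : (A, B, C) ≠ (0, 0, 0)) (hA : A ≤ 0)
    (hB : |B| ≤ 3 * A + C) (ξ : ℝ) (h φ σ : ℝ → ℂ)
    (hh : ContinuousOn h (Set.Icc (-1 : ℝ) 1))
    (hφ : ContDiff ℝ 4 φ)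
    (heq : ∀ y ∈ Set.Ioo (-1 : ℝ) 1,
      iteratedDeriv 4 φ y - 2 * (ξ : ℂ) ^ 2 * iteratedDeriv 2 φ y + (ξ : ℂ) ^ 4 * φ y
        - Complex.I * (ξ : ℂ) *
            (((3 * A * y ^ 2 + B * y + C : ℝ) : ℂ) * (iteratedDeriv 2 φ y - (ξ : ℂ) ^ 2 * φ y)
              - 6 * (A : ℂ) * φ y) = h y)
    (hbc1 : φ (-1) = 0) (hbc2 : φ 1 = 0) (hbc3 : deriv φ (-1) = 0) (hbc4 : deriv φ 1 = 0)
    (hσ : ContDiff ℝ 3 σ)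
    (hφσ : ∀ y ∈ Set.Icc (-1 : ℝ) 1, φ y = ((3 * A * y ^ 2 + B * y + C : ℝ) : ℂ) * σ y) :
    (-12) * A * (∫ y in (-1 : ℝ)..1, ‖deriv σ y‖ ^ 2)
        + (-6) * A * ξ ^ 2 * (∫ y in (-1 : ℝ)..1, ‖σ y‖ ^ 2)
        + (∫ y in (-1 : ℝ)..1, (3 * A * y ^ 2 + B * y + C) *
            (‖iteratedDeriv 2 σ y‖ ^ 2 + 2 * ξ ^ 2 * ‖deriv σ y‖ ^ 2 + ξ ^ 4 * ‖σ y‖ ^ 2))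
      ≤ (∫ y in (-1 : ℝ)..1, h y * (starRingEnd ℂ) (σ y)).re := by
  have hle : (-1:ℝ) ≤ 1 := by norm_num
  -- derivative facts for σ
  have hds0 : ∀ y, HasDerivAt σ (deriv σ y) y :=
    fun y => ((hσ.differentiable (by norm_num)) y).hasDerivAt
  have hds1 : ∀ y, HasDerivAt (deriv σ) (iteratedDeriv 2 σ y) y := by
    intro y
    have h1 : Differentiable ℝ (iteratedDeriv 1 σ) := hσ.differentiable_iteratedDeriv 1 (by norm_num)
    rw [iteratedDeriv_one] at h1
    have h2 := (h1 y).hasDerivAt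
    rwa [show deriv (deriv σ) y = iteratedDeriv 2 σ y from by
      rw [show iteratedDeriv 2 σ = deriv (iteratedDeriv 1 σ) from iteratedDeriv_succ (n := 1),
        iteratedDeriv_one]] at h2
  -- derivative facts for φ
  have hdφ2 : ∀ y, HasDerivAt (iteratedDeriv 2 φ) (iteratedDeriv 3 φ y) y := by
    intro y
    have h1 : Differentiable ℝ (iteratedDeriv 2 φ) := hφ.differentiable_iteratedDeriv 2 (by norm_num)
    have h2 := (h1 y).hasDerivAt
    rwa [show deriv (iteratedDeriv 2 φ) y = iteratedDeriv 3 φ y from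
      congrFun (iteratedDeriv_succ (n := 2)).symm y] at h2
  have hdφ3 : ∀ y, HasDerivAt (iteratedDeriv 3 φ) (iteratedDeriv 4 φ y) y := by
    intro y
    have h1 : Differentiable ℝ (iteratedDeriv 3 φ) := hφ.differentiable_iteratedDeriv 3 (by norm_num)
    have h2 := (h1 y).hasDerivAt
    rwa [show deriv (iteratedDeriv 3 φ) y = iteratedDeriv 4 φ y from
      congrFun (iteratedDeriv_succ (n := 3)).symm y] at h2
  -- continuity facts
  have cσ0 : Continuous σ := hσ.continuous
  have cσ1 : Continuous (deriv σ) := by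
    have := hσ.continuous_iteratedDeriv 1 (by norm_num); rwa [iteratedDeriv_one] at this
  have cσ2 : Continuous (iteratedDeriv 2 σ) := hσ.continuous_iteratedDeriv 2 (by norm_num)
  have cφ2 : Continuous (iteratedDeriv 2 φ) := hφ.continuous_iteratedDeriv 2 (by norm_num)
  have cφ3 : Continuous (iteratedDeriv 3 φ) := hφ.continuous_iteratedDeriv 3 (by norm_num)
  have cF : Continuous (fun y : ℝ => 3*A*y^2 + B*y + C) := by continuity
  have cF' : Continuous (fun y : ℝ => 6*A*y + B) := by continuity
  -- derivative of F σ
  have hg : ∀ y, HasDerivAt (fun t => ((3*A*t^2+B*t+C : ℝ) : ℂ) * σ t)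
      (((6*A*y+B : ℝ) : ℂ) * σ y + ((3*A*y^2+B*y+C : ℝ) : ℂ) * deriv σ y) y :=
    fun y => ((os_hasDerivAt_F A B C y).ofReal_comp.mul (hds0 y))
  have hg1 : ∀ y, HasDerivAt
      (fun t => ((6*A*t+B : ℝ) : ℂ) * σ t + ((3*A*t^2+B*t+C : ℝ) : ℂ) * deriv σ t)
      (6*(A:ℂ)*σ y + 2*((6*A*y+B : ℝ) : ℂ)*deriv σ y
        + ((3*A*y^2+B*y+C : ℝ) : ℂ)*iteratedDeriv 2 σ y) y := by
    intro y
    have h1 := ((os_hasDerivAt_F' A B y).ofReal_comp.mul (hds0 y)).add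
      ((os_hasDerivAt_F A B C y).ofReal_comp.mul (hds1 y))
    exact h1.congr_deriv (by push_cast; ring)
  -- second derivative of φ on the closed interval
  have hφ2_eq : ∀ y ∈ Set.Ioo (-1:ℝ) 1, iteratedDeriv 2 φ y
      = 6*(A:ℂ)*σ y + 2*((6*A*y+B : ℝ) : ℂ)*deriv σ y
        + ((3*A*y^2+B*y+C : ℝ) : ℂ)*iteratedDeriv 2 σ y := by
    intro y hy
    have hmem : Set.Ioo (-1:ℝ) 1 ∈ nhds y := isOpen_Ioo.mem_nhds hy
    have hder_eq : ∀ z ∈ Set.Ioo (-1:ℝ) 1, deriv φ z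
        = ((6*A*z+B : ℝ) : ℂ) * σ z + ((3*A*z^2+B*z+C : ℝ) : ℂ) * deriv σ z := by
      intro z hz
      have hmemz : Set.Ioo (-1:ℝ) 1 ∈ nhds z := isOpen_Ioo.mem_nhds hz
      have hev : φ =ᶠ[nhds z] (fun t => ((3*A*t^2+B*t+C : ℝ) : ℂ) * σ t) :=
        Filter.eventuallyEq_of_mem hmemz (fun w hw => hφσ w (Set.Ioo_subset_Icc_self hw))
      rw [hev.deriv_eq, (hg z).deriv]
    have hev2 : deriv φ =ᶠ[nhds y]
        (fun t => ((6*A*t+B : ℝ) : ℂ) * σ t + ((3*A*t^2+B*t+C : ℝ) : ℂ) * deriv σ t) :=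
      Filter.eventuallyEq_of_mem hmem (fun z hz => hder_eq z hz)
    have e0 : iteratedDeriv 2 φ y = deriv (deriv φ) y := by
      rw [show iteratedDeriv 2 φ = deriv (iteratedDeriv 1 φ) from iteratedDeriv_succ (n := 1),
        iteratedDeriv_one]
    rw [e0, hev2.deriv_eq, (hg1 y).deriv]
  have cg2 : Continuous (fun y => 6*(A:ℂ)*σ y + 2*((6*A*y+B : ℝ) : ℂ)*deriv σ y
      + ((3*A*y^2+B*y+C : ℝ) : ℂ)*iteratedDeriv 2 σ y) := by
    apply Continuous.add
    apply Continuous.add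
    · exact continuous_const.mul cσ0
    · exact (continuous_const.mul (Complex.continuous_ofReal.comp cF')).mul cσ1
    · exact (Complex.continuous_ofReal.comp cF).mul cσ2
  have hφ2_Icc : ∀ y ∈ Set.Icc (-1:ℝ) 1, iteratedDeriv 2 φ y
      = 6*(A:ℂ)*σ y + 2*((6*A*y+B : ℝ) : ℂ)*deriv σ y
        + ((3*A*y^2+B*y+C : ℝ) : ℂ)*iteratedDeriv 2 σ y := by
    have hcl := Set.EqOn.closure (fun y hy => hφ2_eq y hy) cφ2 cg2
    rw [closure_Ioo (by norm_num : (-1:ℝ) ≠ 1)] at hcl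
    exact fun y hy => hcl hy
  -- first derivative of φ at the endpoints
  have hud : UniqueDiffOn ℝ (Set.Icc (-1:ℝ) 1) := uniqueDiffOn_Icc (by norm_num)
  have hd_end : ∀ y ∈ Set.Icc (-1:ℝ) 1, deriv φ y
      = ((6*A*y+B : ℝ) : ℂ) * σ y + ((3*A*y^2+B*y+C : ℝ) : ℂ) * deriv σ y := by
    intro y hy
    have hu : UniqueDiffWithinAt ℝ (Set.Icc (-1:ℝ) 1) y := hud y hy
    have e1 : derivWithin φ (Set.Icc (-1:ℝ) 1) y = deriv φ y :=
      ((hφ.differentiable (by norm_num)) y).hasDerivAt.hasDerivWithinAt.derivWithin hu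
    have e2 : derivWithin φ (Set.Icc (-1:ℝ) 1) y
        = derivWithin (fun t => ((3*A*t^2+B*t+C : ℝ) : ℂ) * σ t) (Set.Icc (-1:ℝ) 1) y :=
      derivWithin_congr (fun z hz => hφσ z hz) (hφσ y hy)
    have e3 : derivWithin (fun t => ((3*A*t^2+B*t+C : ℝ) : ℂ) * σ t) (Set.Icc (-1:ℝ) 1) y
        = ((6*A*y+B : ℝ) : ℂ) * σ y + ((3*A*y^2+B*y+C : ℝ) : ℂ) * deriv σ y :=
      (hg y).hasDerivWithinAt.derivWithin hu
    rw [← e1, e2, e3]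
  -- endpoint vanishing of σ and sign of the boundary functional
  have hmem1 : (1:ℝ) ∈ Set.Icc (-1:ℝ) 1 := by norm_num
  have hmemm1 : (-1:ℝ) ∈ Set.Icc (-1:ℝ) 1 := by norm_num
  have e1 : (6*A*(1:ℝ)+B : ℝ) = 6*A+B := by ring
  have e2 : (3*A*(1:ℝ)^2+B*(1:ℝ)+C : ℝ) = 3*A+B+C := by ring
  have e3 : (6*A*(-1:ℝ)+B : ℝ) = -(6*A)+B := by ring
  have e4 : (3*A*(-1:ℝ)^2+B*(-1:ℝ)+C : ℝ) = 3*A-B+C := by ring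
  have hd1' : (0:ℂ) = ((6*A+B:ℝ):ℂ) * σ 1 + ((3*A+B+C:ℝ):ℂ) * deriv σ 1 := by
    have h0 := hd_end 1 hmem1
    rw [hbc4, e1, e2] at h0
    exact h0
  have hdm1' : (0:ℂ) = ((-(6*A)+B:ℝ):ℂ) * σ (-1) + ((3*A-B+C:ℝ):ℂ) * deriv σ (-1) := by
    have h0 := hd_end (-1) hmemm1
    rw [hbc3, e3, e4] at h0
    exact h0
  have hφ1' : (0:ℂ) = ((3*A+B+C:ℝ):ℂ) * σ 1 := by
    have h0 := hφσ 1 hmem1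
    rw [hbc2, e2] at h0
    exact h0
  have hφm1' : (0:ℂ) = ((3*A-B+C:ℝ):ℂ) * σ (-1) := by
    have h0 := hφσ (-1) hmemm1
    rw [hbc1, e4] at h0
    exact h0
  have hφ21 : iteratedDeriv 2 φ 1
      = 6*(A:ℂ)*σ 1 + 2*((6*A+B : ℝ) : ℂ)*deriv σ 1 + ((3*A+B+C : ℝ) : ℂ)*iteratedDeriv 2 σ 1 := by
    have h0 := hφ2_Icc 1 hmem1
    rw [e1, e2] at h0
    exact h0
  have hφ2m1 : iteratedDeriv 2 φ (-1)
      = 6*(A:ℂ)*σ (-1) + 2*((-(6*A)+B : ℝ) : ℂ)*deriv σ (-1)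
        + ((3*A-B+C : ℝ) : ℂ)*iteratedDeriv 2 σ (-1) := by
    have h0 := hφ2_Icc (-1) hmemm1
    rw [e3, e4] at h0
    exact h0
  have hW1 : 0 ≤ osW A B C ξ φ σ 1 := by
    by_cases hF0 : (3*A+B+C : ℝ) = 0
    · have hsgn : 6*A+B < 0 := os_sign1 hABC hA hB hF0
      have hσ10 : σ 1 = 0 := by
        have h0 := hd1'
        rw [hF0] at h0
        simp only [Complex.ofReal_zero, zero_mul, add_zero] at h0
        rcases mul_eq_zero.mp h0.symm with h' | h'
        · exact absurd (Complex.ofReal_eq_zero.mp h') (ne_of_lt hsgn)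
        · exact h'
      have hq : iteratedDeriv 2 φ 1 = 2*((6*A+B:ℝ):ℂ) * deriv σ 1 := by
        rw [hφ21, hσ10, hF0]
        simp
      simp only [osW, hσ10, hq, e1, e2, hF0]
      simp only [Complex.mul_re, Complex.mul_im, Complex.conj_re, Complex.conj_im,
        Complex.ofReal_re, Complex.ofReal_im, Complex.zero_re, Complex.zero_im,
        Complex.re_ofNat, Complex.im_ofNat, Complex.add_re, Complex.add_im,
        mul_zero, zero_mul]
      nlinarith [sq_nonneg (deriv σ 1).re, sq_nonneg (deriv σ 1).im]
    · have hσ10 : σ 1 = 0 := by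
        rcases mul_eq_zero.mp hφ1'.symm with h' | h'
        · exact absurd (Complex.ofReal_eq_zero.mp h') hF0
        · exact h'
      have hσ11 : deriv σ 1 = 0 := by
        have h0 := hd1'
        rw [hσ10] at h0
        simp only [mul_zero, zero_add] at h0
        rcases mul_eq_zero.mp h0.symm with h' | h'
        · exact absurd (Complex.ofReal_eq_zero.mp h') hF0
        · exact h'
      simp [osW, hσ10, hσ11]
  have hWm1 : osW A B C ξ φ σ (-1) ≤ 0 := by
    by_cases hF0 : (3*A-B+C : ℝ) = 0
    · have hsgn : 0 < -(6*A)+B := os_sign2 hABC hA hB hF0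
      have hσ10 : σ (-1) = 0 := by
        have h0 := hdm1'
        rw [hF0] at h0
        simp only [Complex.ofReal_zero, zero_mul, add_zero] at h0
        rcases mul_eq_zero.mp h0.symm with h' | h'
        · exact absurd (Complex.ofReal_eq_zero.mp h') (ne_of_gt hsgn)
        · exact h'
      have hq : iteratedDeriv 2 φ (-1) = 2*((-(6*A)+B:ℝ):ℂ) * deriv σ (-1) := by
        rw [hφ2m1, hσ10, hF0]
        simp
      simp only [osW, hσ10, hq, e3, e4, hF0]
      simp only [Complex.mul_re, Complex.mul_im, Complex.conj_re, Complex.conj_im,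
        Complex.ofReal_re, Complex.ofReal_im, Complex.zero_re, Complex.zero_im,
        Complex.re_ofNat, Complex.im_ofNat, Complex.add_re, Complex.add_im,
        mul_zero, zero_mul]
      nlinarith [sq_nonneg (deriv σ (-1)).re, sq_nonneg (deriv σ (-1)).im]
    · have hσ10 : σ (-1) = 0 := by
        rcases mul_eq_zero.mp hφm1'.symm with h' | h'
        · exact absurd (Complex.ofReal_eq_zero.mp h') hF0
        · exact h'
      have hσ11 : deriv σ (-1) = 0 := by
        have h0 := hdm1'
        rw [hσ10] at h0
        simp only [mul_zero, zero_add] at h0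
        rcases mul_eq_zero.mp h0.symm with h' | h'
        · exact absurd (Complex.ofReal_eq_zero.mp h') hF0
        · exact h'
      simp [osW, hσ10, hσ11]
  -- continuity of the boundary functional
  have cW : Continuous (osW A B C ξ φ σ) := by
    unfold osW
    exact ((((((os_continuous_re_mul_conj cφ3 cσ0).sub
      (os_continuous_re_mul_conj cφ2 cσ1)).add
      (continuous_const.mul (os_continuous_re_mul_conj cσ0 cσ1))).add
      (cF'.mul (os_continuous_re_mul_conj cσ1 cσ1))).sub
      (continuous_const.mul (cF'.mul (os_continuous_re_mul_conj cσ0 cσ0)))).sub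
      (continuous_const.mul (cF.mul (os_continuous_re_mul_conj cσ1 cσ0)))).add
      (continuous_const.mul ((cF.pow 2).mul (os_continuous_im_mul_conj cσ1 cσ0)))
  -- derivative of the boundary functional on the open interval
  have hderW : ∀ y ∈ Set.Ioo (-1:ℝ) 1, HasDerivAt (osW A B C ξ φ σ)
      ((h y * (starRingEnd ℂ) (σ y)).re
        - ((3*A*y^2+B*y+C) * (‖iteratedDeriv 2 σ y‖^2 + 2*ξ^2*‖deriv σ y‖^2 + ξ^4*‖σ y‖^2)
            - 12*A*‖deriv σ y‖^2 - 6*A*ξ^2*‖σ y‖^2)) y := by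
    intro y hy
    have h1 := os_hasDerivAt_re_mul_conj (hdφ3 y) (hds0 y)
    have h2 := os_hasDerivAt_re_mul_conj (hdφ2 y) (hds1 y)
    have h3 := (os_hasDerivAt_re_mul_conj (hds0 y) (hds1 y)).const_mul (6*A)
    have h4 := (os_hasDerivAt_F' A B y).mul (os_hasDerivAt_re_mul_conj (hds1 y) (hds1 y))
    have h5 := ((os_hasDerivAt_F' A B y).mul
      (os_hasDerivAt_re_mul_conj (hds0 y) (hds0 y))).const_mul (ξ^2)
    have h6 := ((os_hasDerivAt_F A B C y).mul
      (os_hasDerivAt_re_mul_conj (hds1 y) (hds0 y))).const_mul (2*ξ^2)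
    have h7 := (((os_hasDerivAt_F A B C y).pow 2).mul
      (os_hasDerivAt_im_mul_conj (hds1 y) (hds0 y))).const_mul ξ
    unfold osW
    refine ((((((h1.sub h2).add h3).add h4).sub h5).sub h6).add h7).congr_deriv ?_
    rw [← heq y hy, hφσ y (Set.Ioo_subset_Icc_self hy), hφ2_eq y hy]
    simp only [← Complex.ofReal_pow, Pi.pow_apply, Complex.sq_norm, Complex.normSq_apply,
      Complex.add_re, Complex.add_im, Complex.sub_re, Complex.sub_im, Complex.mul_re,
      Complex.mul_im, Complex.conj_re, Complex.conj_im, Complex.ofReal_re, Complex.ofReal_im,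
      Complex.I_re, Complex.I_im, Complex.re_ofNat, Complex.im_ofNat]
    push_cast
    ring
  -- integrability facts
  have hconjcont : Continuous (fun y => (starRingEnd ℂ) (σ y)) := by
    simpa only [starRingEnd_apply, Function.comp_def] using (continuous_star.comp cσ0)
  have hIntC : IntervalIntegrable (fun y => h y * (starRingEnd ℂ) (σ y)) volume (-1) 1 := by
    apply ContinuousOn.intervalIntegrable
    rw [Set.uIcc_of_le hle]
    exact hh.mul hconjcont.continuousOn
  have hInt1 : IntervalIntegrable (fun y => (h y * (starRingEnd ℂ) (σ y)).re) volume (-1) 1 := by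
    apply ContinuousOn.intervalIntegrable
    rw [Set.uIcc_of_le hle]
    exact Complex.continuous_re.comp_continuousOn (hh.mul hconjcont.continuousOn)
  have cI : Continuous (fun y => (3*A*y^2+B*y+C)
      * (‖iteratedDeriv 2 σ y‖^2 + 2*ξ^2*‖deriv σ y‖^2 + ξ^4*‖σ y‖^2)) := by
    apply cF.mul
    exact ((cσ2.norm.pow 2).add (continuous_const.mul (cσ1.norm.pow 2))).add
      (continuous_const.mul (cσ0.norm.pow 2))
  have cI1 : Continuous (fun y : ℝ => 12*A*‖deriv σ y‖^2) := continuous_const.mul (cσ1.norm.pow 2)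
  have cI2 : Continuous (fun y : ℝ => 6*A*ξ^2*‖σ y‖^2) := continuous_const.mul (cσ0.norm.pow 2)
  -- fundamental theorem of calculus
  have hFTC := intervalIntegral.integral_eq_sub_of_hasDerivAt_of_le hle cW.continuousOn hderW
    (hInt1.sub (((cI.sub cI1).sub cI2).intervalIntegrable _ _))
  erw [intervalIntegral.integral_sub hInt1 (((cI.sub cI1).sub cI2).intervalIntegrable _ _),
    intervalIntegral.integral_sub ((cI.sub cI1).intervalIntegrable _ _)
      (cI2.intervalIntegrable _ _),
    intervalIntegral.integral_sub (cI.intervalIntegrable _ _) (cI1.intervalIntegrable _ _),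
    intervalIntegral.integral_const_mul, intervalIntegral.integral_const_mul] at hFTC
  have hre : (∫ y in (-1:ℝ)..1, h y * (starRingEnd ℂ) (σ y)).re
      = ∫ y in (-1:ℝ)..1, (h y * (starRingEnd ℂ) (σ y)).re := by
    have h0 := Complex.reCLM.intervalIntegral_comp_comm hIntC
    simpa [Complex.reCLM_apply] using h0.symm
  rw [hre]
  linarith [hW1, hWm1, hFTC]
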